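/- arXiv:1501.00423 — 2 statements merged into one kernel-verified Lean document; each statement's English description precedes it below -/
import Mathlib

section
/- Let Ω ⊂ ℝⁿ be a bounded connected open set whose signed distance function d is C² on a neighborhood of ∂Ω. Assume condition (reg2) (β-Hölder continuity of σ with β ∈ (1/2,1]) and condition (irrelevant). Then for every κ > 0 and every M > 0 there exists δ > 0 such that for all x ∈ Ω_δ one has F[d^{−κ}](x) ≥ M, i.e. sup_{α∈A} ( κ d(x)^{−κ−1} b(x,α)·Dd(x) + κ d(x)^{−κ−1} tr(a(x,α)D²d(x)) − κ(κ+1) d(x)^{−κ−2} |σ(x,α)ᵀ Dd(x)|² ) ≥ M. -/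
open scoped InnerProductSpace Matrix
open Filter

noncomputable section

/-- The signed distance to the boundary of `Ω`:
`d(x) = dist(x, Ωᶜ) - dist(x, closure Ω)`. -/
def sdist {n : ℕ} (Ω : Set (EuclideanSpace ℝ (Fin n))) (x : EuclideanSpace ℝ (Fin n)) : ℝ :=
  Metric.infDist x Ωᶜ - Metric.infDist x (closure Ω)

/-- The distance to the topological boundary of `Ω`. -/
def bdist {n : ℕ} (Ω : Set (EuclideanSpace ℝ (Fin n))) (x : EuclideanSpace ℝ (Fin n)) : ℝ :=
  Metric.infDist x (frontier Ω)

/-- The Frobenius (Euclidean) norm of a matrix. -/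
def mnorm {n r : ℕ} (M : Matrix (Fin n) (Fin r) ℝ) : ℝ :=
  Real.sqrt (∑ i, ∑ j, M i j ^ 2)

/-- The quadratic form `v ↦ v ⬝ X v`. -/
def quadForm {n : ℕ} (X : Matrix (Fin n) (Fin n) ℝ) (v : EuclideanSpace ℝ (Fin n)) : ℝ :=
  ∑ i, ∑ j, X i j * v i * v j

/-- `Mᵀ v` as a vector in `ℝʳ` (used for `σ(x,α)ᵀ Dd(x)`). -/
def sigmaT {n r : ℕ} (M : Matrix (Fin n) (Fin r) ℝ) (v : EuclideanSpace ℝ (Fin n)) :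
    Fin r → ℝ :=
  Matrix.mulVec Mᵀ (fun i => v i)

/-- The second-order superjet of `u` at `x` relative to `S`. -/
def J2plus {n : ℕ} (S : Set (EuclideanSpace ℝ (Fin n))) (u : EuclideanSpace ℝ (Fin n) → ℝ)
    (x : EuclideanSpace ℝ (Fin n)) :
    Set (EuclideanSpace ℝ (Fin n) × Matrix (Fin n) (Fin n) ℝ) :=
  { pX | pX.2.IsSymm ∧ ∀ ε > (0 : ℝ), ∀ᶠ y in nhdsWithin x S,
      u y - u x - ⟪pX.1, y - x⟫_ℝ - (1 / 2) * quadForm pX.2 (y - x) ≤ ε * ‖y - x‖ ^ 2 }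

/-- The second-order subjet of `u` at `x` relative to `S`: `J^{2,-}u = -J^{2,+}(-u)`. -/
def J2minus {n : ℕ} (S : Set (EuclideanSpace ℝ (Fin n))) (u : EuclideanSpace ℝ (Fin n) → ℝ)
    (x : EuclideanSpace ℝ (Fin n)) :
    Set (EuclideanSpace ℝ (Fin n) × Matrix (Fin n) (Fin n) ℝ) :=
  { qZ | (-qZ.1, -qZ.2) ∈ J2plus S (fun y => -u y) x }

/-- The first-order superdifferential of `u` at `x` relative to `S`. -/
def D1plus {n : ℕ} (S : Set (EuclideanSpace ℝ (Fin n))) (u : EuclideanSpace ℝ (Fin n) → ℝ)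
    (x : EuclideanSpace ℝ (Fin n)) : Set (EuclideanSpace ℝ (Fin n)) :=
  { q | ∀ ε > (0 : ℝ), ∀ᶠ y in nhdsWithin x S, u y - u x - ⟪q, y - x⟫_ℝ ≤ ε * ‖y - x‖ }

/-- The Bellman operator `F(x,p,X) = sup_{α ∈ A} (-b(x,α)·p - tr(σσᵀ X))`. -/
def Fop {n m r : ℕ} (A : Set (Fin m → ℝ))
    (b : EuclideanSpace ℝ (Fin n) → (Fin m → ℝ) → EuclideanSpace ℝ (Fin n))
    (σ : EuclideanSpace ℝ (Fin n) → (Fin m → ℝ) → Matrix (Fin n) (Fin r) ℝ)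
    (x p : EuclideanSpace ℝ (Fin n)) (X : Matrix (Fin n) (Fin n) ℝ) : ℝ :=
  sSup ((fun α => -⟪b x α, p⟫_ℝ - Matrix.trace (σ x α * (σ x α)ᵀ * X)) '' A)

/-- The Hamiltonian `H(x,p,X) = sup_{α ∈ A} (-b(x,α)·p - tr(σσᵀ X) - l(x,α))`. -/
def Hop {n m r : ℕ} (A : Set (Fin m → ℝ))
    (b : EuclideanSpace ℝ (Fin n) → (Fin m → ℝ) → EuclideanSpace ℝ (Fin n))
    (σ : EuclideanSpace ℝ (Fin n) → (Fin m → ℝ) → Matrix (Fin n) (Fin r) ℝ)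
    (l : EuclideanSpace ℝ (Fin n) → (Fin m → ℝ) → ℝ)
    (x p : EuclideanSpace ℝ (Fin n)) (X : Matrix (Fin n) (Fin n) ℝ) : ℝ :=
  sSup ((fun α => -⟪b x α, p⟫_ℝ - Matrix.trace (σ x α * (σ x α)ᵀ * X) - l x α) '' A)

/-- The set of projections of `x` onto `∂Ω`. -/
def projSet {n : ℕ} (Ω : Set (EuclideanSpace ℝ (Fin n))) (x : EuclideanSpace ℝ (Fin n)) :
    Set (EuclideanSpace ℝ (Fin n)) :=
  { z | z ∈ frontier Ω ∧ dist x z = bdist Ω x }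

/-- The interior normal directions at a boundary point `z`. -/
def normalDirs {n : ℕ} (Ω : Set (EuclideanSpace ℝ (Fin n))) (z : EuclideanSpace ℝ (Fin n)) :
    Set (EuclideanSpace ℝ (Fin n)) :=
  { ν | ‖ν‖ = 1 ∧ ∃ x ∈ Ω, x = z + bdist Ω x • ν }

lemma mnorm_nonneg {n r : ℕ} (M : Matrix (Fin n) (Fin r) ℝ) : 0 ≤ mnorm M := Real.sqrt_nonneg _

lemma abs_sum_mul_le {ι : Type*} [Fintype ι] (f g : ι → ℝ) :
    |∑ i, f i * g i| ≤ Real.sqrt (∑ i, f i ^ 2) * Real.sqrt (∑ i, g i ^ 2) := by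
  have h := Finset.sum_mul_sq_le_sq_mul_sq Finset.univ f g
  have := Real.sqrt_le_sqrt h
  rw [Real.sqrt_sq_eq_abs] at this
  calc |∑ i, f i * g i| ≤ Real.sqrt ((∑ i, f i ^ 2) * ∑ i, g i ^ 2) := this
    _ = _ := Real.sqrt_mul (by positivity) _

lemma sigmaT_apply {n r : ℕ} (M : Matrix (Fin n) (Fin r) ℝ) (v : EuclideanSpace ℝ (Fin n))
    (j : Fin r) : sigmaT M v j = ∑ i, M i j * v i := by
  simp [sigmaT, Matrix.mulVec, dotProduct, Matrix.transpose_apply]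

lemma enorm_sigmaT_le {n r : ℕ} (M : Matrix (Fin n) (Fin r) ℝ) (v : EuclideanSpace ℝ (Fin n)) :
    Real.sqrt (∑ j, sigmaT M v j ^ 2) ≤ mnorm M * ‖v‖ := by
  have hv : ‖v‖ = Real.sqrt (∑ i, v i ^ 2) := by
    rw [EuclideanSpace.norm_eq]
    congr 1
    exact Finset.sum_congr rfl fun i _ => by rw [Real.norm_eq_abs, sq_abs]
  have key : (∑ j, sigmaT M v j ^ 2) ≤ (∑ i, ∑ j, M i j ^ 2) * (∑ i, v i ^ 2) := by
    have h1 : ∀ j : Fin r, sigmaT M v j ^ 2 ≤ (∑ i, M i j ^ 2) * (∑ i, v i ^ 2) := by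
      intro j
      rw [sigmaT_apply]
      exact Finset.sum_mul_sq_le_sq_mul_sq Finset.univ _ _
    calc (∑ j, sigmaT M v j ^ 2) ≤ ∑ j, (∑ i, M i j ^ 2) * (∑ i, v i ^ 2) :=
          Finset.sum_le_sum fun j _ => h1 j
      _ = (∑ j, ∑ i, M i j ^ 2) * (∑ i, v i ^ 2) := by rw [Finset.sum_mul]
      _ = (∑ i, ∑ j, M i j ^ 2) * (∑ i, v i ^ 2) := by rw [Finset.sum_comm]
  calc Real.sqrt (∑ j, sigmaT M v j ^ 2)
      ≤ Real.sqrt ((∑ i, ∑ j, M i j ^ 2) * (∑ i, v i ^ 2)) := Real.sqrt_le_sqrt key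
    _ = mnorm M * ‖v‖ := by rw [Real.sqrt_mul (by positivity), hv]; rfl

lemma sqrt_sum_sq_add_le {r : ℕ} (u w : Fin r → ℝ) :
    Real.sqrt (∑ j, (u j + w j) ^ 2) ≤
      Real.sqrt (∑ j, u j ^ 2) + Real.sqrt (∑ j, w j ^ 2) := by
  have e : ∀ f : Fin r → ℝ,
      Real.sqrt (∑ j, f j ^ 2) = ‖(WithLp.equiv 2 (Fin r → ℝ)).symm f‖ := by
    intro f
    rw [EuclideanSpace.norm_eq]
    congr 1
    exact Finset.sum_congr rfl fun i _ => by
      show f i ^ 2 = ‖f i‖ ^ 2; rw [Real.norm_eq_abs, sq_abs]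
  have : (WithLp.equiv 2 (Fin r → ℝ)).symm (u + w) =
      (WithLp.equiv 2 (Fin r → ℝ)).symm u + (WithLp.equiv 2 (Fin r → ℝ)).symm w := rfl
  calc Real.sqrt (∑ j, (u j + w j) ^ 2)
      = ‖(WithLp.equiv 2 (Fin r → ℝ)).symm (u + w)‖ := by rw [← e (u + w)]; rfl
    _ ≤ _ := by rw [this, e u, e w]; exact norm_add_le _ _

lemma abs_trace_mul_le {n : ℕ} (P Q : Matrix (Fin n) (Fin n) ℝ) :
    |Matrix.trace (P * Q)| ≤ mnorm P * mnorm Q := by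
  have ht : Matrix.trace (P * Q) = ∑ p : Fin n × Fin n, P p.1 p.2 * Q p.2 p.1 := by
    rw [Matrix.trace]
    rw [Fintype.sum_prod_type]
    exact Finset.sum_congr rfl fun i _ => by
      simp [Matrix.diag, Matrix.mul_apply]
  rw [ht]
  have h := abs_sum_mul_le (fun p : Fin n × Fin n => P p.1 p.2) (fun p => Q p.2 p.1)
  have e1 : (∑ p : Fin n × Fin n, P p.1 p.2 ^ 2) = ∑ i, ∑ j, P i j ^ 2 :=
    Fintype.sum_prod_type _
  have e2 : (∑ p : Fin n × Fin n, Q p.2 p.1 ^ 2) = ∑ i, ∑ j, Q i j ^ 2 := by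
    rw [Fintype.sum_prod_type, Finset.sum_comm]
  rw [e1, e2] at h
  exact h

lemma mnorm_mul_transpose_le {n r : ℕ} (M : Matrix (Fin n) (Fin r) ℝ) :
    mnorm (M * Mᵀ) ≤ mnorm M ^ 2 := by
  have key : (∑ i, ∑ j, (M * Mᵀ) i j ^ 2) ≤ (∑ i, ∑ k, M i k ^ 2) ^ 2 := by
    have h1 : ∀ i j, (M * Mᵀ) i j ^ 2 ≤ (∑ k, M i k ^ 2) * (∑ k, M j k ^ 2) := by
      intro i j
      have : (M * Mᵀ) i j = ∑ k, M i k * M j k := by simp [Matrix.mul_apply]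
      rw [this]
      exact Finset.sum_mul_sq_le_sq_mul_sq Finset.univ _ _
    calc (∑ i, ∑ j, (M * Mᵀ) i j ^ 2)
        ≤ ∑ i, ∑ j, (∑ k, M i k ^ 2) * (∑ k, M j k ^ 2) :=
          Finset.sum_le_sum fun i _ => Finset.sum_le_sum fun j _ => h1 i j
      _ = (∑ i, ∑ k, M i k ^ 2) ^ 2 := by
          rw [sq]
          rw [Finset.sum_mul]
          exact Finset.sum_congr rfl fun i _ => by rw [← Finset.mul_sum]
  calc mnorm (M * Mᵀ) ≤ Real.sqrt ((∑ i, ∑ k, M i k ^ 2) ^ 2) := Real.sqrt_le_sqrt key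
    _ = |∑ i, ∑ k, M i k ^ 2| := Real.sqrt_sq_eq_abs _
    _ = ∑ i, ∑ k, M i k ^ 2 := abs_of_nonneg (by positivity)
    _ = mnorm M ^ 2 := (Real.sq_sqrt (by positivity)).symm

set_option maxHeartbeats 2000000 in
theorem statement_11
    {n m r : ℕ} (Ω : Set (EuclideanSpace ℝ (Fin n)))
    (hΩo : IsOpen Ω) (hΩconn : IsConnected Ω) (hΩbdd : Bornology.IsBounded Ω)
    (A : Set (Fin m → ℝ)) (hA : IsClosed A) (hAne : A.Nonempty)
    (b : EuclideanSpace ℝ (Fin n) → (Fin m → ℝ) → EuclideanSpace ℝ (Fin n))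
    (σ : EuclideanSpace ℝ (Fin n) → (Fin m → ℝ) → Matrix (Fin n) (Fin r) ℝ)
    (hbBdd : ∃ C, ∀ x ∈ closure Ω, ∀ α ∈ A, ‖b x α‖ ≤ C)
    (hσBdd : ∃ C, ∀ x ∈ closure Ω, ∀ α ∈ A, mnorm (σ x α) ≤ C)
    (hbCont : ContinuousOn (fun q : EuclideanSpace ℝ (Fin n) × (Fin m → ℝ) => b q.1 q.2)
      (closure Ω ×ˢ A))
    (hσCont : ContinuousOn (fun q : EuclideanSpace ℝ (Fin n) × (Fin m → ℝ) => σ q.1 q.2)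
      (closure Ω ×ˢ A))
    (δ₀ : ℝ) (hδ₀ : 0 < δ₀)
    (Dd : EuclideanSpace ℝ (Fin n) → EuclideanSpace ℝ (Fin n))
    (D2d : EuclideanSpace ℝ (Fin n) → Matrix (Fin n) (Fin n) ℝ)
    (hDd : ∀ x, |sdist Ω x| < δ₀ → HasGradientAt (sdist Ω) (Dd x) x)
    (hDdnorm : ∀ x, |sdist Ω x| < δ₀ → ‖Dd x‖ = 1)
    (hD2d : ∀ x, |sdist Ω x| < δ₀ →
      HasFDerivAt Dd (LinearMap.toContinuousLinearMap (Matrix.toEuclideanLin (D2d x))) x)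
    (hD2dCont : ContinuousOn D2d {x | |sdist Ω x| < δ₀})
    (β B : ℝ) (hβlow : 1 / 2 < β) (hβhigh : β ≤ 1) (hB : 0 < B)
    (hreg2 : ∀ x ∈ closure Ω, ∀ y ∈ closure Ω, ∀ α ∈ A,
      mnorm (σ x α - σ y α) ≤ B * ‖x - y‖ ^ β)
    (hirr : ∃ δ > (0 : ℝ), ∃ k > (0 : ℝ), ∃ γ : ℝ, γ < 2 * β - 1 ∧
      ∀ z ∈ frontier Ω, ∃ α₀ ∈ A, sigmaT (σ z α₀) (Dd z) = 0 ∧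
        ∀ x ∈ Ω ∩ Metric.ball z δ,
          k * sdist Ω x ^ γ ≤
            ⟪b x α₀, Dd x⟫_ℝ + Matrix.trace (σ x α₀ * (σ x α₀)ᵀ * D2d x))
    :
    ∀ κ > (0 : ℝ), ∀ M > (0 : ℝ), ∃ δ > (0 : ℝ), ∀ x ∈ Ω, sdist Ω x < δ →
      M ≤ sSup ((fun α =>
        κ * sdist Ω x ^ (-κ - 1) * ⟪b x α, Dd x⟫_ℝ
          + κ * sdist Ω x ^ (-κ - 1) * Matrix.trace (σ x α * (σ x α)ᵀ * D2d x)
          - κ * (κ + 1) * sdist Ω x ^ (-κ - 2) *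
            (∑ i, sigmaT (σ x α) (Dd x) i ^ 2)) '' A) := by
  intro κ hκ M hM
  by_cases hne : Ω = Set.univ
  · exfalso
    have hzero : ∀ y, sdist Ω y = 0 := by
      intro y
      simp [sdist, hne, Metric.infDist_zero_of_mem (Set.mem_univ y)]
    have hlt : |sdist Ω 0| < δ₀ := by rw [hzero 0]; simpa using hδ₀
    have h1 := hDd 0 hlt
    have h2 : HasGradientAt (sdist Ω) 0 (0 : EuclideanSpace ℝ (Fin n)) := by
      have he : (sdist Ω) = fun _ : EuclideanSpace ℝ (Fin n) => (0 : ℝ) := funext hzero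
      rw [he]
      exact hasGradientAt_const (𝕜 := ℝ) (F := EuclideanSpace ℝ (Fin n))
        (c := (0 : ℝ)) (x := (0 : EuclideanSpace ℝ (Fin n)))
    have h3 : Dd 0 = 0 := h1.unique h2
    have h4 := hDdnorm 0 hlt
    rw [h3] at h4
    simp at h4
  -- main case
  obtain ⟨δI, hδI, k, hk, γ, hγ, hir⟩ := hirr
  obtain ⟨Cσ, hCσ⟩ := hσBdd
  obtain ⟨Cb, hCb⟩ := hbBdd
  set Cσ' := max Cσ 0 with hCσ'def
  set Cb' := max Cb 0 with hCb'def
  have hCσ' : ∀ x ∈ closure Ω, ∀ α ∈ A, mnorm (σ x α) ≤ Cσ' :=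
    fun x hx α hα => le_trans (hCσ x hx α hα) (le_max_left _ _)
  have hCb' : ∀ x ∈ closure Ω, ∀ α ∈ A, ‖b x α‖ ≤ Cb' :=
    fun x hx α hα => le_trans (hCb x hx α hα) (le_max_left _ _)
  have hCσ'nn : 0 ≤ Cσ' := le_max_right _ _
  clear_value Cσ' Cb'
  have hΩne : Ω.Nonempty := hΩconn.nonempty
  obtain ⟨x₀, hx₀⟩ := hΩne
  -- the compact collar
  set K₀ : Set (EuclideanSpace ℝ (Fin n)) := {y | |sdist Ω y| ≤ δ₀ / 2} with hK₀def
  have hsdc : Continuous (sdist Ω) :=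
    (Metric.continuous_infDist_pt _).sub (Metric.continuous_infDist_pt _)
  have hK₀closed : IsClosed K₀ := isClosed_le (continuous_abs.comp hsdc) continuous_const
  have hK₀bdd : Bornology.IsBounded K₀ := by
    obtain ⟨R, hR⟩ := (hΩbdd.closure).subset_closedBall x₀
    apply (Metric.isBounded_closedBall (x := x₀) (r := R + (δ₀ / 2 + 1))).subset
    intro y hy
    have hyd : Metric.infDist y (closure Ω) ≤ δ₀ / 2 := by
      by_cases hyΩ : y ∈ closure Ω
      · rw [Metric.infDist_zero_of_mem hyΩ]; linarith
      · have hyc : y ∈ Ωᶜ := fun h => hyΩ (subset_closure h)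
        have h0 : Metric.infDist y Ωᶜ = 0 := Metric.infDist_zero_of_mem hyc
        have hy' : |sdist Ω y| ≤ δ₀ / 2 := hy
        rw [sdist, h0, zero_sub, abs_neg, abs_of_nonneg Metric.infDist_nonneg] at hy'
        exact hy'
    have hlt2 : Metric.infDist y (closure Ω) < δ₀ / 2 + 1 := lt_of_le_of_lt hyd (by linarith)
    obtain ⟨p, hp, hdist⟩ := (Metric.infDist_lt_iff ⟨x₀, subset_closure hx₀⟩).mp hlt2
    have hpball := hR hp
    rw [Metric.mem_closedBall] at hpball ⊢
    calc dist y x₀ ≤ dist y p + dist p x₀ := dist_triangle _ _ _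
      _ ≤ (δ₀ / 2 + 1) + R := add_le_add hdist.le hpball
      _ = R + (δ₀ / 2 + 1) := by ring
  have hK₀cpt : IsCompact K₀ := Metric.isCompact_of_isClosed_isBounded hK₀closed hK₀bdd
  have hK₀sub : K₀ ⊆ {x | |sdist Ω x| < δ₀} := by
    intro y hy
    have : |sdist Ω y| ≤ δ₀ / 2 := hy
    simp only [Set.mem_setOf_eq]
    linarith
  -- bound on D2d as operator
  set T : Matrix (Fin n) (Fin n) ℝ →ₗ[ℝ]
      (EuclideanSpace ℝ (Fin n) →L[ℝ] EuclideanSpace ℝ (Fin n)) :=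
    (LinearMap.toContinuousLinearMap :
        (EuclideanSpace ℝ (Fin n) →ₗ[ℝ] EuclideanSpace ℝ (Fin n)) ≃ₗ[ℝ] _).toLinearMap.comp
      (Matrix.toEuclideanLin :
        Matrix (Fin n) (Fin n) ℝ ≃ₗ[ℝ] _).toLinearMap with hTdef
  have hTapp : ∀ Mx : Matrix (Fin n) (Fin n) ℝ,
      T Mx = LinearMap.toContinuousLinearMap (Matrix.toEuclideanLin Mx) := fun _ => rfl
  have hTcont : Continuous T := T.continuous_of_finiteDimensional
  have hφcont : ContinuousOn (fun y => ‖T (D2d y)‖) K₀ :=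
    (continuous_norm.comp hTcont).comp_continuousOn (hD2dCont.mono hK₀sub)
  obtain ⟨L₀, hL₀⟩ := hK₀cpt.exists_bound_of_continuousOn hφcont
  clear_value T
  set L := max L₀ 0 with hLdef
  have hLnn : (0 : ℝ) ≤ L := le_max_right _ _
  have hL : ∀ y ∈ K₀,
      ‖LinearMap.toContinuousLinearMap (Matrix.toEuclideanLin (D2d y))‖ ≤ L := by
    intro y hy
    have h := hL₀ y hy
    rw [Real.norm_eq_abs] at h
    rw [← hTapp]
    exact le_trans (le_trans (le_abs_self _) h) (le_max_left _ _)
  clear_value L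
  -- constants
  set C₂ : ℝ := B + Cσ' * L with hC₂def
  have hC₂pos : 0 < C₂ := by
    have h := mul_nonneg hCσ'nn hLnn
    rw [hC₂def]; linarith
  clear_value C₂
  set η : ℝ := 2 * β - 1 - γ with hηdef
  have hη : 0 < η := by rw [hηdef]; linarith
  clear_value η
  set e₁ : ℝ := γ - κ - 1 with he₁def
  have he₁ : e₁ < 0 := by rw [he₁def]; linarith
  clear_value e₁
  set Dc : ℝ := κ * (κ + 1) * C₂ ^ 2 + 1 with hDcdef
  have hDc : 0 < Dc := by
    have h : 0 ≤ κ * (κ + 1) * C₂ ^ 2 :=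
      mul_nonneg (mul_nonneg hκ.le (by linarith)) (sq_nonneg _)
    rw [hDcdef]; linarith
  clear_value Dc
  have hckpos : 0 < κ * k / (2 * Dc) := div_pos (mul_pos hκ hk) (by linarith)
  have hcMpos : 0 < 2 * M / (κ * k) := div_pos (by linarith) (mul_pos hκ hk)
  set δ₂ : ℝ := (κ * k / (2 * Dc)) ^ (1 / η) with hδ₂def
  have hδ₂pos : 0 < δ₂ := Real.rpow_pos_of_pos hckpos _
  clear_value δ₂
  set δ₃ : ℝ := (2 * M / (κ * k)) ^ (1 / e₁) with hδ₃def
  have hδ₃pos : 0 < δ₃ := Real.rpow_pos_of_pos hcMpos _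
  clear_value δ₃
  refine ⟨min (min δI (δ₀ / 4)) (min 1 (min δ₂ δ₃)),
    lt_min (lt_min hδI (by linarith)) (lt_min one_pos (lt_min hδ₂pos hδ₃pos)), ?_⟩
  intro x hx hxδ
  set d := sdist Ω x with hd
  clear_value d
  have hxcl : x ∈ closure Ω := subset_closure hx
  have hdeq : d = Metric.infDist x Ωᶜ := by
    have h0 : Metric.infDist x (closure Ω) = 0 := Metric.infDist_zero_of_mem hxcl
    rw [hd, sdist, h0, sub_zero]
  have hΩcne : (Ωᶜ : Set (EuclideanSpace ℝ (Fin n))).Nonempty := Set.nonempty_compl.mpr hne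
  have hd0 : 0 < d := by
    rw [hdeq]
    exact (IsClosed.notMem_iff_infDist_pos hΩo.isClosed_compl hΩcne).mp (by simpa using hx)
  have hdδI : d < δI := lt_of_lt_of_le hxδ (le_trans (min_le_left _ _) (min_le_left _ _))
  have hdδ₀4 : d < δ₀ / 4 := lt_of_lt_of_le hxδ (le_trans (min_le_left _ _) (min_le_right _ _))
  have hd1 : d ≤ 1 := le_of_lt (lt_of_lt_of_le hxδ
    (le_trans (min_le_right _ _) (min_le_left _ _)))
  have hdδ₂ : d ≤ δ₂ := le_of_lt (lt_of_lt_of_le hxδ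
    (le_trans (min_le_right _ _) (le_trans (min_le_right _ _) (min_le_left _ _))))
  have hdδ₃ : d ≤ δ₃ := le_of_lt (lt_of_lt_of_le hxδ
    (le_trans (min_le_right _ _) (le_trans (min_le_right _ _) (min_le_right _ _))))
  obtain ⟨z, hzfr, hzd⟩ := exists_mem_frontier_infDist_compl_eq_dist hx hne
  have hdz : dist x z = d := by rw [hdeq, hzd]
  have hzcl : z ∈ closure Ω := frontier_subset_closure hzfr
  have hznΩ : z ∉ Ω := by
    rw [hΩo.frontier_eq] at hzfr
    exact hzfr.2
  have hsz : Metric.infDist z Ωᶜ - Metric.infDist z (closure Ω) = 0 := by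
    rw [Metric.infDist_zero_of_mem (show z ∈ Ωᶜ from hznΩ),
      Metric.infDist_zero_of_mem hzcl, sub_zero]
  -- sdist is 2-Lipschitz relative to z
  have hsdist_le : ∀ y, |sdist Ω y| ≤ 2 * dist y z := by
    intro y
    have h1a := Metric.infDist_le_infDist_add_dist (x := y) (y := z) (s := Ωᶜ)
    have h1b := Metric.infDist_le_infDist_add_dist (x := z) (y := y) (s := Ωᶜ)
    have h2a := Metric.infDist_le_infDist_add_dist (x := y) (y := z) (s := closure Ω)
    have h2b := Metric.infDist_le_infDist_add_dist (x := z) (y := y) (s := closure Ω)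
    rw [dist_comm z y] at h1b h2b
    have hy : sdist Ω y = Metric.infDist y Ωᶜ - Metric.infDist y (closure Ω) := rfl
    rw [hy, abs_le]
    constructor <;> linarith
  have hsegsub : segment ℝ z x ⊆ K₀ ∩ {y | |sdist Ω y| < δ₀} := by
    intro y hy
    have hyb : y ∈ Metric.closedBall z (dist x z) := by
      apply (convex_closedBall z (dist x z)).segment_subset _ _ hy
      · exact Metric.mem_closedBall_self dist_nonneg
      · rw [Metric.mem_closedBall]
    have hyz : dist y z ≤ d := by rw [← hdz]; exact hyb
    have h2 := hsdist_le y
    constructor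
    · show |sdist Ω y| ≤ δ₀ / 2
      linarith
    · show |sdist Ω y| < δ₀
      linarith
  have hDdLip : ‖Dd x - Dd z‖ ≤ L * ‖x - z‖ := by
    apply Convex.norm_image_sub_le_of_norm_hasFDerivWithin_le
      (f := Dd)
      (f' := fun y => LinearMap.toContinuousLinearMap (Matrix.toEuclideanLin (D2d y)))
      (s := segment ℝ z x)
      (fun y hy => (hD2d y (hsegsub hy).2).hasFDerivWithinAt)
      (fun y hy => hL y (hsegsub hy).1)
      (convex_segment z x) (left_mem_segment ℝ z x) (right_mem_segment ℝ z x)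
  have hxz : ‖x - z‖ = d := by rw [← dist_eq_norm]; exact hdz
  obtain ⟨α₀, hα₀A, hσz0, hlow⟩ := hir z hzfr
  have hmain := hlow x ⟨hx, by rw [Metric.mem_ball, hdz]; exact hdδI⟩
  rw [← hd] at hmain
  have hdlt : |sdist Ω x| < δ₀ := by
    rw [← hd, abs_of_pos hd0]
    linarith
  have hDdx1 : ‖Dd x‖ = 1 := hDdnorm x hdlt
  -- the quadratic term bound
  have hdecomp : ∀ j, sigmaT (σ x α₀) (Dd x) j
      = sigmaT (σ x α₀ - σ z α₀) (Dd x) j + sigmaT (σ z α₀) (Dd x - Dd z) j := by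
    intro j
    have h0 : (∑ i, σ z α₀ i j * Dd z i) = 0 := by
      rw [← sigmaT_apply, hσz0]; rfl
    rw [sigmaT_apply, sigmaT_apply, sigmaT_apply, ← Finset.sum_add_distrib]
    have hexp : ∀ i, (σ x α₀ - σ z α₀) i j * Dd x i + σ z α₀ i j * (Dd x - Dd z) i
        = σ x α₀ i j * Dd x i - σ z α₀ i j * Dd z i := by
      intro i
      have hs1 : (σ x α₀ - σ z α₀) i j = σ x α₀ i j - σ z α₀ i j := rfl
      have hs2 : (Dd x - Dd z) i = Dd x i - Dd z i := rfl
      rw [hs1, hs2]; ring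
    rw [Finset.sum_congr rfl fun i _ => hexp i, Finset.sum_sub_distrib, h0, sub_zero]
  set sq : ℝ := ∑ j, sigmaT (σ x α₀) (Dd x) j ^ 2 with hsqdef
  have hsq_nonneg : 0 ≤ sq := Finset.sum_nonneg fun j _ => sq_nonneg _
  clear_value sq
  have hddβ : d ≤ d ^ β := by
    calc d = d ^ (1 : ℝ) := (Real.rpow_one d).symm
      _ ≤ d ^ β := Real.rpow_le_rpow_of_exponent_ge hd0 hd1 hβhigh
  have hdβpos : 0 < d ^ β := Real.rpow_pos_of_pos hd0 _
  have hsqrt : Real.sqrt sq ≤ C₂ * d ^ β := by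
    have e0 : Real.sqrt sq = Real.sqrt (∑ j, (sigmaT (σ x α₀ - σ z α₀) (Dd x) j
        + sigmaT (σ z α₀) (Dd x - Dd z) j) ^ 2) := by
      rw [hsqdef]
      congr 1
      exact Finset.sum_congr rfl fun j _ => by rw [hdecomp j]
    have e1 := sqrt_sum_sq_add_le (sigmaT (σ x α₀ - σ z α₀) (Dd x))
      (sigmaT (σ z α₀) (Dd x - Dd z))
    have e2 := enorm_sigmaT_le (σ x α₀ - σ z α₀) (Dd x)
    have e3 := enorm_sigmaT_le (σ z α₀) (Dd x - Dd z)
    have e4 : mnorm (σ x α₀ - σ z α₀) ≤ B * ‖x - z‖ ^ β := hreg2 x hxcl z hzcl α₀ hα₀A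
    have e5 : mnorm (σ z α₀) ≤ Cσ' := hCσ' z hzcl α₀ hα₀A
    have e6 : mnorm (σ x α₀ - σ z α₀) * ‖Dd x‖ ≤ B * d ^ β := by
      rw [hDdx1, mul_one, ← hxz]
      exact e4
    have e7 : mnorm (σ z α₀) * ‖Dd x - Dd z‖ ≤ Cσ' * (L * d) := by
      apply mul_le_mul e5 _ (norm_nonneg _) hCσ'nn
      rw [← hxz]
      exact hDdLip
    have e8 : Cσ' * (L * d) ≤ Cσ' * L * d ^ β := by
      rw [mul_assoc]
      apply mul_le_mul_of_nonneg_left _ hCσ'nn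
      exact mul_le_mul_of_nonneg_left hddβ hLnn
    calc Real.sqrt sq ≤ Real.sqrt (∑ j, sigmaT (σ x α₀ - σ z α₀) (Dd x) j ^ 2)
          + Real.sqrt (∑ j, sigmaT (σ z α₀) (Dd x - Dd z) j ^ 2) := by rw [e0]; exact e1
      _ ≤ mnorm (σ x α₀ - σ z α₀) * ‖Dd x‖ + mnorm (σ z α₀) * ‖Dd x - Dd z‖ := add_le_add e2 e3
      _ ≤ B * d ^ β + Cσ' * L * d ^ β := add_le_add e6 (le_trans e7 e8)
      _ = C₂ * d ^ β := by rw [hC₂def]; ring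
  have hS : sq ≤ C₂ ^ 2 * d ^ (2 * β) := by
    have h1 : sq = Real.sqrt sq ^ 2 := (Real.sq_sqrt hsq_nonneg).symm
    have h2 : Real.sqrt sq ^ 2 ≤ (C₂ * d ^ β) ^ 2 :=
      pow_le_pow_left₀ (Real.sqrt_nonneg _) hsqrt 2
    have h3 : (C₂ * d ^ β) ^ 2 = C₂ ^ 2 * d ^ (2 * β) := by
      rw [mul_pow, ← Real.rpow_natCast (d ^ β) 2, ← Real.rpow_mul hd0.le]
      norm_num [mul_comm β 2]
    linarith
  -- rpow algebra
  have hp1 : 0 < d ^ (-κ - 1) := Real.rpow_pos_of_pos hd0 _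
  have hp2 : 0 < d ^ (-κ - 2) := Real.rpow_pos_of_pos hd0 _
  have hr1 : d ^ (-κ - 1) * d ^ γ = d ^ e₁ := by
    rw [← Real.rpow_add hd0, he₁def]; ring_nf
  have hr2 : d ^ (-κ - 2) * d ^ (2 * β) = d ^ e₁ * d ^ η := by
    rw [← Real.rpow_add hd0, ← Real.rpow_add hd0, he₁def, hηdef]; ring_nf
  have he₁pos : 0 < d ^ e₁ := Real.rpow_pos_of_pos hd0 _
  have hdη : d ^ η ≤ κ * k / (2 * Dc) := by
    calc d ^ η ≤ δ₂ ^ η := Real.rpow_le_rpow hd0.le hdδ₂ hη.le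
      _ = κ * k / (2 * Dc) := by
        rw [hδ₂def, ← Real.rpow_mul hckpos.le, one_div, inv_mul_cancel₀ hη.ne',
          Real.rpow_one]
  have hbound2 : κ * (κ + 1) * C₂ ^ 2 * d ^ η ≤ κ * k / 2 := by
    have h1 : κ * (κ + 1) * C₂ ^ 2 ≤ Dc := by rw [hDcdef]; linarith
    have h2 : Dc * d ^ η ≤ Dc * (κ * k / (2 * Dc)) := mul_le_mul_of_nonneg_left hdη hDc.le
    have h3 : Dc * (κ * k / (2 * Dc)) = κ * k / 2 := by field_simp
    have h4 : κ * (κ + 1) * C₂ ^ 2 * d ^ η ≤ Dc * d ^ η :=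
      mul_le_mul_of_nonneg_right h1 (Real.rpow_pos_of_pos hd0 η).le
    exact h4.trans (h2.trans_eq h3)
  have hde₁ : 2 * M / (κ * k) ≤ d ^ e₁ := by
    have h1 : δ₃ ^ e₁ ≤ d ^ e₁ := Real.rpow_le_rpow_of_nonpos hd0 hdδ₃ he₁.le
    have h2 : δ₃ ^ e₁ = 2 * M / (κ * k) := by
      rw [hδ₃def, ← Real.rpow_mul hcMpos.le, one_div, inv_mul_cancel₀ he₁.ne,
        Real.rpow_one]
    linarith
  -- lower bound for the value at α₀
  have hval : M ≤ κ * d ^ (-κ - 1) * ⟪b x α₀, Dd x⟫_ℝ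
      + κ * d ^ (-κ - 1) * Matrix.trace (σ x α₀ * (σ x α₀)ᵀ * D2d x)
      - κ * (κ + 1) * d ^ (-κ - 2) * sq := by
    have s1 : κ * d ^ (-κ - 1) * (k * d ^ γ)
        ≤ κ * d ^ (-κ - 1) * (⟪b x α₀, Dd x⟫_ℝ
          + Matrix.trace (σ x α₀ * (σ x α₀)ᵀ * D2d x)) :=
      mul_le_mul_of_nonneg_left hmain (mul_pos hκ hp1).le
    have s2 : κ * (κ + 1) * d ^ (-κ - 2) * sq
        ≤ κ * (κ + 1) * d ^ (-κ - 2) * (C₂ ^ 2 * d ^ (2 * β)) :=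
      mul_le_mul_of_nonneg_left hS (mul_pos (mul_pos hκ (by linarith)) hp2).le
    have s3 : κ * d ^ (-κ - 1) * (k * d ^ γ) = κ * k * d ^ e₁ := by
      rw [show κ * d ^ (-κ - 1) * (k * d ^ γ) = κ * k * (d ^ (-κ - 1) * d ^ γ) from by ring,
        hr1]
    have s4 : κ * (κ + 1) * d ^ (-κ - 2) * (C₂ ^ 2 * d ^ (2 * β))
        = κ * (κ + 1) * C₂ ^ 2 * d ^ η * d ^ e₁ := by
      rw [show κ * (κ + 1) * d ^ (-κ - 2) * (C₂ ^ 2 * d ^ (2 * β))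
          = κ * (κ + 1) * C₂ ^ 2 * (d ^ (-κ - 2) * d ^ (2 * β)) from by ring, hr2]
      ring
    have s5 : κ * (κ + 1) * C₂ ^ 2 * d ^ η * d ^ e₁ ≤ κ * k / 2 * d ^ e₁ :=
      mul_le_mul_of_nonneg_right hbound2 he₁pos.le
    have s6 : κ * k / 2 * (2 * M / (κ * k)) ≤ κ * k / 2 * d ^ e₁ :=
      mul_le_mul_of_nonneg_left hde₁ (by positivity)
    have s7 : κ * k / 2 * (2 * M / (κ * k)) = M := by
      have hκk : κ * k ≠ 0 := (mul_pos hκ hk).ne'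
      field_simp
    have s8 : κ * d ^ (-κ - 1) * (⟪b x α₀, Dd x⟫_ℝ
        + Matrix.trace (σ x α₀ * (σ x α₀)ᵀ * D2d x))
        = κ * d ^ (-κ - 1) * ⟪b x α₀, Dd x⟫_ℝ
          + κ * d ^ (-κ - 1) * Matrix.trace (σ x α₀ * (σ x α₀)ᵀ * D2d x) := by ring
    have s9 : κ * k * d ^ e₁ = κ * k / 2 * d ^ e₁ + κ * k / 2 * d ^ e₁ := by ring
    linarith
  refine le_trans hval (le_csSup ?_ ⟨α₀, hα₀A, ?_⟩)
  · refine ⟨κ * d ^ (-κ - 1) * Cb' + κ * d ^ (-κ - 1) * (Cσ' ^ 2 * mnorm (D2d x)), ?_⟩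
    rintro v ⟨α, hαA, rfl⟩
    have hb1 : ⟪b x α, Dd x⟫_ℝ ≤ Cb' := by
      have h := real_inner_le_norm (b x α) (Dd x)
      rw [hDdx1, mul_one] at h
      exact le_trans h (hCb' x hxcl α hαA)
    have ht1 : Matrix.trace (σ x α * (σ x α)ᵀ * D2d x) ≤ Cσ' ^ 2 * mnorm (D2d x) := by
      have h1 := abs_trace_mul_le (σ x α * (σ x α)ᵀ) (D2d x)
      have h2 := mnorm_mul_transpose_le (σ x α)
      have h3 := hCσ' x hxcl α hαA
      have h4 := mnorm_nonneg (D2d x)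
      have h5 := mnorm_nonneg (σ x α)
      calc Matrix.trace (σ x α * (σ x α)ᵀ * D2d x)
          ≤ |Matrix.trace (σ x α * (σ x α)ᵀ * D2d x)| := le_abs_self _
        _ ≤ mnorm (σ x α * (σ x α)ᵀ) * mnorm (D2d x) := h1
        _ ≤ mnorm (σ x α) ^ 2 * mnorm (D2d x) := mul_le_mul_of_nonneg_right h2 h4
        _ ≤ Cσ' ^ 2 * mnorm (D2d x) := by
            refine mul_le_mul_of_nonneg_right ?_ h4
            exact pow_le_pow_left₀ h5 h3 2
    have ht3 : 0 ≤ κ * (κ + 1) * d ^ (-κ - 2) * (∑ i, sigmaT (σ x α) (Dd x) i ^ 2) :=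
      mul_nonneg (mul_nonneg (mul_nonneg hκ.le (by linarith)) hp2.le)
        (Finset.sum_nonneg fun i _ => sq_nonneg _)
    have hm1 : κ * d ^ (-κ - 1) * ⟪b x α, Dd x⟫_ℝ ≤ κ * d ^ (-κ - 1) * Cb' :=
      mul_le_mul_of_nonneg_left hb1 (mul_pos hκ hp1).le
    have hm2 : κ * d ^ (-κ - 1) * Matrix.trace (σ x α * (σ x α)ᵀ * D2d x)
        ≤ κ * d ^ (-κ - 1) * (Cσ' ^ 2 * mnorm (D2d x)) :=
      mul_le_mul_of_nonneg_left ht1 (mul_pos hκ hp1).le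
    beta_reduce
    linarith
  · rw [hsqdef]
end
end

section
/- Let Ω ⊂ ℝⁿ be a bounded connected open set whose signed distance function d is C² on a neighborhood of ∂Ω, with b and σ bounded continuous and a := σσᵀ. Suppose x̲ ∈ ∂Ω and α̲ ∈ A are such that either σ(x̲,α̲)ᵀ Dd(x̲) ≠ 0, or b(x̲,α̲)·Dd(x̲) + tr(a(x̲,α̲)D²d(x̲)) < 0. Then there exist r > 0, k > 0, λ > 0 and μ > 0 such that the function W(x) := 1 − e^{−k(d(x) + λ|x − x̲|²)} satisfies: (i) W(x) ≥ 0 and F[W](x) > 0 for all x ∈ B(x̲,r) ∩ cl Ω; (ii) W(x̲) = 0; and (iii) W(x) ≥ μ for all x ∈ cl Ω with |x − x̲| = r. -/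
open scoped InnerProductSpace Matrix
open Filter

noncomputable section

lemma mnorm_sq {n r : ℕ} (M : Matrix (Fin n) (Fin r) ℝ) :
    mnorm M ^ 2 = ∑ i, ∑ j, M i j ^ 2 := by
  rw [mnorm, Real.sq_sqrt]; positivity

lemma norm_sq_eq {n : ℕ} (v : EuclideanSpace ℝ (Fin n)) : ‖v‖ ^ 2 = ∑ i, v i ^ 2 := by
  rw [EuclideanSpace.norm_eq, Real.sq_sqrt (by positivity)]
  simp [Real.norm_eq_abs, sq_abs]

lemma sigmaT_sum_sq_le {n r : ℕ} (M : Matrix (Fin n) (Fin r) ℝ) (v : EuclideanSpace ℝ (Fin n)) :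
    ∑ j, sigmaT M v j ^ 2 ≤ mnorm M ^ 2 * ‖v‖ ^ 2 := by
  rw [mnorm_sq, norm_sq_eq]
  calc ∑ j, sigmaT M v j ^ 2
      ≤ ∑ j, ((∑ i, M i j ^ 2) * ∑ i, v i ^ 2) := by
        refine Finset.sum_le_sum fun j _ => ?_
        rw [sigmaT_apply]
        exact Finset.sum_mul_sq_le_sq_mul_sq _ _ _
    _ = (∑ i, ∑ j, M i j ^ 2) * ∑ i, v i ^ 2 := by
        rw [← Finset.sum_mul, Finset.sum_comm]

lemma entry_abs_le {n r : ℕ} (σ : Matrix (Fin n) (Fin r) ℝ) (i j : Fin n) :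
    |(σ * σᵀ) i j| ≤ mnorm σ ^ 2 := by
  rw [Matrix.mul_apply]
  have h1 : (∑ k, σ i k * σᵀ k j) ^ 2 ≤ (∑ k, σ i k ^ 2) * ∑ k, σᵀ k j ^ 2 :=
    Finset.sum_mul_sq_le_sq_mul_sq _ _ _
  have h2 : (∑ k, σ i k ^ 2) ≤ mnorm σ ^ 2 := by
    rw [mnorm_sq]
    exact Finset.single_le_sum (f := fun i => ∑ j, σ i j ^ 2)
      (fun i _ => by positivity) (Finset.mem_univ i)
  have h3 : (∑ k, σᵀ k j ^ 2) ≤ mnorm σ ^ 2 := by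
    rw [mnorm_sq]
    simp only [Matrix.transpose_apply]
    exact Finset.single_le_sum (f := fun i => ∑ j, σ i j ^ 2)
      (fun i _ => by positivity) (Finset.mem_univ j)
  have h4 : (0:ℝ) ≤ mnorm σ ^ 2 := by positivity
  have h5 : (0:ℝ) ≤ ∑ k, σ i k ^ 2 := by positivity
  rw [abs_le]
  constructor <;> nlinarith [h1, h2, h3, h4, h5]

lemma trace_mul_abs_le {n r : ℕ} (σ : Matrix (Fin n) (Fin r) ℝ) (M : Matrix (Fin n) (Fin n) ℝ) :
    |Matrix.trace (σ * σᵀ * M)| ≤ mnorm σ ^ 2 * ∑ i, ∑ j, |M i j| := by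
  rw [Matrix.trace]
  calc |∑ i, (σ * σᵀ * M).diag i|
      ≤ ∑ i, |(σ * σᵀ * M).diag i| := Finset.abs_sum_le_sum_abs _ _
    _ ≤ ∑ i, ∑ j, |(σ * σᵀ) i j| * |M j i| := by
        refine Finset.sum_le_sum fun i _ => ?_
        rw [Matrix.diag_apply, Matrix.mul_apply]
        exact (Finset.abs_sum_le_sum_abs _ _).trans
          (le_of_eq (Finset.sum_congr rfl fun j _ => abs_mul _ _))
    _ ≤ ∑ i, ∑ j, mnorm σ ^ 2 * |M j i| := by
        refine Finset.sum_le_sum fun i _ => Finset.sum_le_sum fun j _ => ?_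
        exact mul_le_mul_of_nonneg_right (entry_abs_le σ i j) (abs_nonneg _)
    _ = mnorm σ ^ 2 * ∑ i, ∑ j, |M i j| := by
        rw [Finset.mul_sum, Finset.sum_comm]
        exact Finset.sum_congr rfl fun i _ => by rw [Finset.mul_sum]

lemma trace_sq_nonneg {n r : ℕ} (σ : Matrix (Fin n) (Fin r) ℝ) :
    0 ≤ Matrix.trace (σ * σᵀ) := by
  rw [Matrix.trace]
  refine Finset.sum_nonneg fun i _ => ?_
  rw [Matrix.diag_apply, Matrix.mul_apply]
  refine Finset.sum_nonneg fun k _ => ?_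
  simp only [Matrix.transpose_apply]
  exact mul_self_nonneg _

lemma cont_sigma_sum {n r : ℕ} :
    Continuous (fun p : Matrix (Fin n) (Fin r) ℝ × EuclideanSpace ℝ (Fin n) =>
      ∑ j, sigmaT p.1 p.2 j ^ 2) := by
  simp only [sigmaT_apply]
  refine continuous_finset_sum _ fun j _ => Continuous.pow ?_ 2
  refine continuous_finset_sum _ fun i _ => Continuous.mul ?_ ?_
  · exact (continuous_apply j).comp ((continuous_apply i).comp continuous_fst)
  · exact (EuclideanSpace.proj i).continuous.comp continuous_snd

lemma cont_trace_fn {n r : ℕ} :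
    Continuous (fun p : Matrix (Fin n) (Fin r) ℝ × Matrix (Fin n) (Fin n) ℝ =>
      Matrix.trace (p.1 * p.1ᵀ * p.2)) :=
  Continuous.matrix_trace ((continuous_fst.matrix_mul
    continuous_fst.matrix_transpose).matrix_mul continuous_snd)

set_option maxHeartbeats 1000000 in
theorem statement_19
    {n m r : ℕ} (Ω : Set (EuclideanSpace ℝ (Fin n)))
    (hΩo : IsOpen Ω) (hΩconn : IsConnected Ω) (hΩbdd : Bornology.IsBounded Ω)
    (A : Set (Fin m → ℝ)) (hA : IsClosed A) (hAne : A.Nonempty)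
    (b : EuclideanSpace ℝ (Fin n) → (Fin m → ℝ) → EuclideanSpace ℝ (Fin n))
    (σ : EuclideanSpace ℝ (Fin n) → (Fin m → ℝ) → Matrix (Fin n) (Fin r) ℝ)
    (hbBdd : ∃ C, ∀ x ∈ closure Ω, ∀ α ∈ A, ‖b x α‖ ≤ C)
    (hσBdd : ∃ C, ∀ x ∈ closure Ω, ∀ α ∈ A, mnorm (σ x α) ≤ C)
    (hbCont : ContinuousOn (fun q : EuclideanSpace ℝ (Fin n) × (Fin m → ℝ) => b q.1 q.2)
      (closure Ω ×ˢ A))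
    (hσCont : ContinuousOn (fun q : EuclideanSpace ℝ (Fin n) × (Fin m → ℝ) => σ q.1 q.2)
      (closure Ω ×ˢ A))
    (δ₀ : ℝ) (hδ₀ : 0 < δ₀)
    (Dd : EuclideanSpace ℝ (Fin n) → EuclideanSpace ℝ (Fin n))
    (D2d : EuclideanSpace ℝ (Fin n) → Matrix (Fin n) (Fin n) ℝ)
    (hDd : ∀ x, |sdist Ω x| < δ₀ → HasGradientAt (sdist Ω) (Dd x) x)
    (hDdnorm : ∀ x, |sdist Ω x| < δ₀ → ‖Dd x‖ = 1)
    (hD2d : ∀ x, |sdist Ω x| < δ₀ →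
      HasFDerivAt Dd (LinearMap.toContinuousLinearMap (Matrix.toEuclideanLin (D2d x))) x)
    (hD2dCont : ContinuousOn D2d {x | |sdist Ω x| < δ₀})
    (x₀ : EuclideanSpace ℝ (Fin n)) (hx₀ : x₀ ∈ frontier Ω)
    (α₀ : Fin m → ℝ) (hα₀ : α₀ ∈ A)
    (hrel : sigmaT (σ x₀ α₀) (Dd x₀) ≠ 0 ∨
      ⟪b x₀ α₀, Dd x₀⟫_ℝ + Matrix.trace (σ x₀ α₀ * (σ x₀ α₀)ᵀ * D2d x₀) < 0) :
    ∃ rad > (0 : ℝ), ∃ k > (0 : ℝ), ∃ lam > (0 : ℝ), ∃ μ > (0 : ℝ),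
      (∀ x ∈ Metric.ball x₀ rad ∩ closure Ω,
        0 ≤ 1 - Real.exp (-(k * (sdist Ω x + lam * ‖x - x₀‖ ^ 2))) ∧
        0 < sSup ((fun α =>
          Real.exp (-(k * (sdist Ω x + lam * ‖x - x₀‖ ^ 2))) *
            (-(k * ⟪b x α, Dd x + (2 * lam) • (x - x₀)⟫_ℝ)
              - k * Matrix.trace (σ x α * (σ x α)ᵀ *
                  (D2d x + (2 * lam) • (1 : Matrix (Fin n) (Fin n) ℝ)))
              + k ^ 2 * ∑ i, sigmaT (σ x α) (Dd x + (2 * lam) • (x - x₀)) i ^ 2)) '' A)) ∧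
      1 - Real.exp (-(k * (sdist Ω x₀ + lam * ‖x₀ - x₀‖ ^ 2))) = 0 ∧
      (∀ x ∈ closure Ω, ‖x - x₀‖ = rad →
        μ ≤ 1 - Real.exp (-(k * (sdist Ω x + lam * ‖x - x₀‖ ^ 2)))) := by
  classical
  obtain ⟨Cb₀, hCb₀⟩ := hbBdd
  obtain ⟨Cσ₀, hCσ₀⟩ := hσBdd
  have hx₀' : x₀ ∈ closure Ω ∩ closure Ωᶜ := frontier_eq_closure_inter_closure (s := Ω) ▸ hx₀
  have hx₀cl : x₀ ∈ closure Ω := hx₀'.1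
  have hsd₀ : sdist Ω x₀ = 0 := by
    rw [sdist, Metric.infDist_zero_of_mem_closure hx₀'.2,
      Metric.infDist_zero_of_mem hx₀cl, sub_zero]
  have hsdnn : ∀ x ∈ closure Ω, 0 ≤ sdist Ω x := by
    intro x hx
    rw [sdist, Metric.infDist_zero_of_mem hx, sub_zero]
    exact Metric.infDist_nonneg
  set c₁ := ∑ j, sigmaT (σ x₀ α₀) (Dd x₀) j ^ 2 with hc₁def
  set c₂ := -⟪b x₀ α₀, Dd x₀⟫_ℝ - Matrix.trace (σ x₀ α₀ * (σ x₀ α₀)ᵀ * D2d x₀) with hc₂def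
  set T := Matrix.trace (σ x₀ α₀ * (σ x₀ α₀)ᵀ) with hTdef
  have hT : 0 ≤ T := trace_sq_nonneg _
  have hc₁nn : 0 ≤ c₁ := Finset.sum_nonneg fun j _ => sq_nonneg _
  obtain ⟨k, hk, lam, hlam, hpos0⟩ :
      ∃ k > (0:ℝ), ∃ lam > (0:ℝ), 0 < k * c₂ - k * (2 * lam * T) + k ^ 2 * c₁ := by
    rcases hrel with h | h
    · have hc₁ : 0 < c₁ := by
        rcases Function.ne_iff.mp h with ⟨j, hj⟩
        refine Finset.sum_pos' (fun i _ => sq_nonneg _) ⟨j, Finset.mem_univ j, ?_⟩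
        have hj' : sigmaT (σ x₀ α₀) (Dd x₀) j ≠ 0 := by simpa using hj
        positivity
      refine ⟨(|c₂ - 2 * T| + 1) / c₁, by positivity, 1, one_pos, ?_⟩
      have hkpos : 0 < (|c₂ - 2 * T| + 1) / c₁ := by positivity
      have hk2 : ((|c₂ - 2 * T| + 1) / c₁) ^ 2 * c₁
          = (|c₂ - 2 * T| + 1) / c₁ * (|c₂ - 2 * T| + 1) := by
        rw [pow_two, mul_assoc, div_mul_cancel₀ _ hc₁.ne']
      rw [hk2]
      nlinarith [mul_le_mul_of_nonneg_left (neg_abs_le (c₂ - 2 * T)) hkpos.le, hkpos]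
    · have hc₂ : 0 < c₂ := by rw [hc₂def]; linarith
      refine ⟨1, one_pos, c₂ / (4 * (T + 1)), by positivity, ?_⟩
      have hT1 : (0:ℝ) < T + 1 := by linarith
      have hle : c₂ / (4 * (T + 1)) * T ≤ c₂ / 4 := by
        rw [div_mul_eq_mul_div, div_le_div_iff₀ (by positivity) (by norm_num)]
        nlinarith
      nlinarith [hle, hc₁nn, hc₂]
  -- continuity data
  have hsdc : Continuous (sdist Ω) :=
    (Metric.continuous_infDist_pt _).sub (Metric.continuous_infDist_pt _)
  have hmemδ : x₀ ∈ {x : EuclideanSpace ℝ (Fin n) | |sdist Ω x| < δ₀} := by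
    simp [hsd₀, hδ₀]
  have hopen : IsOpen {x : EuclideanSpace ℝ (Fin n) | |sdist Ω x| < δ₀} :=
    isOpen_lt (continuous_abs.comp hsdc) continuous_const
  have hDdc : ContinuousAt Dd x₀ := (hD2d x₀ (by simpa using hmemδ)).continuousAt
  have hD2dc : ContinuousAt D2d x₀ := hD2dCont.continuousAt (hopen.mem_nhds hmemδ)
  have hpair : ContinuousWithinAt (fun x : EuclideanSpace ℝ (Fin n) => (x, α₀))
      (closure Ω) x₀ := (continuous_id.prodMk continuous_const).continuousWithinAt
  have hmaps : Set.MapsTo (fun x : EuclideanSpace ℝ (Fin n) => (x, α₀)) (closure Ω)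
      (closure Ω ×ˢ A) := fun x hx => ⟨hx, hα₀⟩
  have hbc : ContinuousWithinAt (fun x => b x α₀) (closure Ω) x₀ := by
    exact ContinuousWithinAt.comp (g := fun q : EuclideanSpace ℝ (Fin n) × (Fin m → ℝ) => b q.1 q.2)
      (f := fun x : EuclideanSpace ℝ (Fin n) => (x, α₀)) (x := x₀)
      (hbCont (x₀, α₀) ⟨hx₀cl, hα₀⟩) hpair hmaps
  have hσc : ContinuousWithinAt (fun x => σ x α₀) (closure Ω) x₀ := by
    exact ContinuousWithinAt.comp (g := fun q : EuclideanSpace ℝ (Fin n) × (Fin m → ℝ) => σ q.1 q.2)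
      (f := fun x : EuclideanSpace ℝ (Fin n) => (x, α₀)) (x := x₀)
      (hσCont (x₀, α₀) ⟨hx₀cl, hα₀⟩) hpair hmaps
  have hvc : ContinuousWithinAt
      (fun x : EuclideanSpace ℝ (Fin n) => Dd x + (2 * lam) • (x - x₀)) (closure Ω) x₀ :=
    hDdc.continuousWithinAt.add
      (((continuous_id.sub continuous_const).const_smul (2 * lam)).continuousWithinAt)
  have hMc : ContinuousWithinAt
      (fun x => D2d x + (2 * lam) • (1 : Matrix (Fin n) (Fin n) ℝ)) (closure Ω) x₀ :=
    hD2dc.continuousWithinAt.add continuousWithinAt_const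
  have hEc : Continuous (fun x : EuclideanSpace ℝ (Fin n) =>
      Real.exp (-(k * (sdist Ω x + lam * ‖x - x₀‖ ^ 2)))) :=
    Real.continuous_exp.comp
      ((continuous_const.mul (hsdc.add (continuous_const.mul
        (((continuous_id.sub continuous_const).norm.pow 2))))).neg)
  set G : EuclideanSpace ℝ (Fin n) → ℝ := fun x =>
    Real.exp (-(k * (sdist Ω x + lam * ‖x - x₀‖ ^ 2))) *
      (-(k * ⟪b x α₀, Dd x + (2 * lam) • (x - x₀)⟫_ℝ)
        - k * Matrix.trace (σ x α₀ * (σ x α₀)ᵀ *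
            (D2d x + (2 * lam) • (1 : Matrix (Fin n) (Fin n) ℝ)))
        + k ^ 2 * ∑ i, sigmaT (σ x α₀) (Dd x + (2 * lam) • (x - x₀)) i ^ 2) with hGdef
  have hGc : ContinuousWithinAt G (closure Ω) x₀ := by
    rw [hGdef]
    refine hEc.continuousWithinAt.mul ?_
    refine ContinuousWithinAt.add (ContinuousWithinAt.sub ?_ ?_) ?_
    · exact (continuousWithinAt_const.mul (hbc.inner hvc)).neg
    · refine continuousWithinAt_const.mul ?_
      have h := ContinuousWithinAt.comp
        (g := fun p : Matrix (Fin n) (Fin r) ℝ × Matrix (Fin n) (Fin n) ℝ =>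
          Matrix.trace (p.1 * p.1ᵀ * p.2))
        (f := fun x : EuclideanSpace ℝ (Fin n) =>
          ((σ x α₀, D2d x + (2 * lam) • (1 : Matrix (Fin n) (Fin n) ℝ)) :
            Matrix (Fin n) (Fin r) ℝ × Matrix (Fin n) (Fin n) ℝ))
        (t := Set.univ) (cont_trace_fn.continuousWithinAt) (hσc.prodMk hMc)
        (Set.mapsTo_univ _ _)
      exact h
    · refine continuousWithinAt_const.mul ?_
      have h := ContinuousWithinAt.comp
        (g := fun p : Matrix (Fin n) (Fin r) ℝ × EuclideanSpace ℝ (Fin n) =>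
          ∑ j, sigmaT p.1 p.2 j ^ 2)
        (f := fun x : EuclideanSpace ℝ (Fin n) =>
          ((σ x α₀, Dd x + (2 * lam) • (x - x₀)) :
            Matrix (Fin n) (Fin r) ℝ × EuclideanSpace ℝ (Fin n)))
        (t := Set.univ) (cont_sigma_sum.continuousWithinAt) (hσc.prodMk hvc)
        (Set.mapsTo_univ _ _)
      exact h
  have hG₀ : G x₀ = k * c₂ - k * (2 * lam * T) + k ^ 2 * c₁ := by
    rw [hGdef]
    simp only [sub_self, norm_zero, smul_zero, add_zero, hsd₀, mul_zero, zero_pow,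
      neg_zero, Real.exp_zero, one_mul, ne_eq, OfNat.ofNat_ne_zero, not_false_eq_true]
    rw [Matrix.mul_add, Matrix.mul_smul, Matrix.mul_one, Matrix.trace_add, Matrix.trace_smul,
      smul_eq_mul, hc₂def, hTdef, hc₁def]
    ring
  have hpos' : 0 < G x₀ := hG₀ ▸ hpos0
  have hev : {y | 0 < G y} ∈ nhdsWithin x₀ (closure Ω) := hGc (Ioi_mem_nhds hpos')
  obtain ⟨rad, hrad, hsub⟩ := Metric.mem_nhdsWithin_iff.mp hev
  refine ⟨rad, hrad, k, hk, lam, hlam, 1 - Real.exp (-(k * (lam * rad ^ 2))), ?_, ?_, ?_, ?_⟩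
  · have : Real.exp (-(k * (lam * rad ^ 2))) < 1 := by
      rw [Real.exp_lt_one_iff]
      have : 0 < k * (lam * rad ^ 2) := by positivity
      linarith
    linarith
  · rintro x ⟨hxb, hxc⟩
    constructor
    · have h1 : 0 ≤ k * (sdist Ω x + lam * ‖x - x₀‖ ^ 2) :=
        mul_nonneg hk.le (add_nonneg (hsdnn x hxc) (by positivity))
      have := Real.exp_le_one_iff.mpr (neg_nonpos.mpr h1)
      linarith
    · have hGx : 0 < G x := hsub ⟨hxb, hxc⟩
      refine lt_csSup_of_lt ?_ (Set.mem_image_of_mem _ hα₀) hGx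
      -- BddAbove
      set Cb := max Cb₀ 0 with hCbdef
      set Cσ := max Cσ₀ 0 with hCσdef
      have hCσnn : 0 ≤ Cσ := le_max_right _ _
      set v : EuclideanSpace ℝ (Fin n) := Dd x + (2 * lam) • (x - x₀) with hvdef
      set Mx : Matrix (Fin n) (Fin n) ℝ :=
        D2d x + (2 * lam) • (1 : Matrix (Fin n) (Fin n) ℝ) with hMxdef
      set S : ℝ := ∑ i, ∑ j, |Mx i j| with hSdef
      have hSnn : 0 ≤ S := Finset.sum_nonneg fun i _ => Finset.sum_nonneg fun j _ => abs_nonneg _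
      refine ⟨Real.exp (-(k * (sdist Ω x + lam * ‖x - x₀‖ ^ 2))) *
        (k * (Cb * ‖v‖) + k * (Cσ ^ 2 * S) + k ^ 2 * (Cσ ^ 2 * ‖v‖ ^ 2)), ?_⟩
      rintro y ⟨α, hα, rfl⟩
      dsimp only
      refine mul_le_mul_of_nonneg_left ?_ (Real.exp_nonneg _)
      have hmn : mnorm (σ x α) ≤ Cσ := (hCσ₀ x hxc α hα).trans (le_max_left _ _)
      have hmn2 : mnorm (σ x α) ^ 2 ≤ Cσ ^ 2 :=
        pow_le_pow_left₀ (Real.sqrt_nonneg _) hmn 2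
      have e1 : -(k * ⟪b x α, v⟫_ℝ) ≤ k * (Cb * ‖v‖) := by
        have h1 : -⟪b x α, v⟫_ℝ ≤ Cb * ‖v‖ :=
          (neg_le_abs _).trans ((abs_real_inner_le_norm _ _).trans
            (mul_le_mul_of_nonneg_right ((hCb₀ x hxc α hα).trans (le_max_left _ _))
              (norm_nonneg _)))
        calc -(k * ⟪b x α, v⟫_ℝ) = k * -⟪b x α, v⟫_ℝ := by ring
          _ ≤ k * (Cb * ‖v‖) := mul_le_mul_of_nonneg_left h1 hk.le
      have e2 : -(k * Matrix.trace (σ x α * (σ x α)ᵀ * Mx)) ≤ k * (Cσ ^ 2 * S) := by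
        have h1 : -Matrix.trace (σ x α * (σ x α)ᵀ * Mx) ≤ Cσ ^ 2 * S :=
          (neg_le_abs _).trans ((trace_mul_abs_le _ _).trans
            (mul_le_mul_of_nonneg_right hmn2 hSnn))
        calc -(k * Matrix.trace (σ x α * (σ x α)ᵀ * Mx))
            = k * -Matrix.trace (σ x α * (σ x α)ᵀ * Mx) := by ring
          _ ≤ k * (Cσ ^ 2 * S) := mul_le_mul_of_nonneg_left h1 hk.le
      have e3 : k ^ 2 * (∑ i, sigmaT (σ x α) v i ^ 2) ≤ k ^ 2 * (Cσ ^ 2 * ‖v‖ ^ 2) := by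
        refine mul_le_mul_of_nonneg_left ?_ (by positivity)
        exact (sigmaT_sum_sq_le _ _).trans
          (mul_le_mul_of_nonneg_right hmn2 (by positivity))
      linarith [e1, e2, e3]
  · simp [hsd₀]
  · intro x hxc hxr
    have h1 : Real.exp (-(k * (sdist Ω x + lam * ‖x - x₀‖ ^ 2)))
        ≤ Real.exp (-(k * (lam * rad ^ 2))) := by
      apply Real.exp_le_exp.mpr
      have hd := hsdnn x hxc
      rw [hxr]
      nlinarith [mul_nonneg hk.le hd]
    linarith
end
end
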